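/- Let N ≥ 2 and let U = I₁ × ⋯ × I_N ⊆ ℝ^N be an open box (a product of open intervals). Let c_k : U → ℝ (indexed by k ∈ ℤ) and V₁, …, V_N : U → ℝ be smooth functions such that: (i) for every k ∈ ℤ and every i ∈ {1,…,N}, ∂_i c_{k+1} = (V_i + c₁) ∂_i c_k on U; (ii) ∂_i c₁ vanishes nowhere on U for every i; (iii) for all i ≠ j and all r ∈ U, V_i(r) + c₁(r) ≠ V_j(r) + c₁(r). Then there exist smooth one-variable functions f_i : I_i → ℝ and ψ_i : I_i → ℝ (i = 1,…,N) such that for all r ∈ U: c₁(r) = Σ_{m=1}^N ψ_m(r_m) and V_i(r) = f_i(r_i) − Σ_{m=1}^N ψ_m(r_m). -/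

import Mathlib

open Real Set

/-- Partial derivative of `f : (Fin N → ℝ) → ℝ` in the `i`-th coordinate at `r`. -/
noncomputable def pd {N : ℕ} (i : Fin N) (f : (Fin N → ℝ) → ℝ) (r : Fin N → ℝ) : ℝ :=
  deriv (fun s => f (Function.update r i s)) (r i)

namespace RedVelAux

lemma one_le_inf : (1 : WithTop ℕ∞) ≤ ((⊤:ℕ∞) : WithTop ℕ∞) := by norm_num

lemma two_le_inf : (2 : WithTop ℕ∞) ≤ ((⊤:ℕ∞) : WithTop ℕ∞) := by
  have h : ((2:ℕ∞) : WithTop ℕ∞) = (2 : WithTop ℕ∞) := by norm_cast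
  rw [← h]; exact WithTop.coe_le_coe.2 le_top

lemma inf_add_one : ((⊤:ℕ∞) : WithTop ℕ∞) + 1 ≤ ((⊤:ℕ∞) : WithTop ℕ∞) := by norm_num

lemma alg3 (Li Lj a X Y : ℝ) (h : Li ≠ Lj)
    (e1 : Li * a + X = Lj * a + Y)
    (e2 : Li^2 * a + 2*Li*X = Lj^2 * a + 2*Lj*Y)
    (e3 : Li^3 * a + 3*Li^2*X = Lj^3 * a + 3*Lj^2*Y) :
    a = 0 ∧ X = 0 ∧ Y = 0 := by
  have hd : Li - Lj ≠ 0 := sub_ne_zero.2 h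
  have h2 : 2*(Li-Lj)*X = -(Li-Lj)^2*a := by linear_combination e2 - (2*Lj)*e1
  have hX : X = -((Li-Lj)*a)/2 :=
    mul_left_cancel₀ (mul_ne_zero two_ne_zero hd) (by linear_combination h2)
  have hY : Y = ((Li-Lj)*a)/2 := by linear_combination -e1 + hX
  have ha : a * (Li - Lj)^3 = 0 := by linear_combination -2*e3 + 6*Li^2*hX - 6*Lj^2*hY
  have ha0 : a = 0 := by
    rcases mul_eq_zero.1 ha with h | h
    · exact h
    · exact absurd h (pow_ne_zero 3 hd)
  refine ⟨ha0, ?_, ?_⟩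
  · rw [hX, ha0]; ring
  · rw [hY, ha0]; ring

lemma hasDerivAt_comp_update {N : ℕ} {g : (Fin N → ℝ) → ℝ} {r : Fin N → ℝ} (i : Fin N)
    (hg : DifferentiableAt ℝ g r) :
    HasDerivAt (fun s => g (Function.update r i s)) (fderiv ℝ g r (Pi.single i 1)) (r i) := by
  have hu : Function.update r i (r i) = r := Function.update_eq_self i r
  have hF : HasFDerivAt g (fderiv ℝ g r) (Function.update r i (r i)) := by
    rw [hu]; exact hg.hasFDerivAt
  exact hF.comp_hasDerivAt (r i) (hasDerivAt_update r i (r i))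

lemma pd_eq_fderiv {N : ℕ} {g : (Fin N → ℝ) → ℝ} {r : Fin N → ℝ} (i : Fin N)
    (hg : DifferentiableAt ℝ g r) :
    pd i g r = fderiv ℝ g r (Pi.single i 1) := (hasDerivAt_comp_update i hg).deriv

lemma fderiv_inner_apply {N : ℕ} {g : (Fin N → ℝ) → ℝ} {r : Fin N → ℝ}
    (hg : DifferentiableAt ℝ (fderiv ℝ g) r) (i j : Fin N) :
    fderiv ℝ (fun x => fderiv ℝ g x (Pi.single i 1)) r (Pi.single j 1)
      = fderiv ℝ (fderiv ℝ g) r (Pi.single j 1) (Pi.single i 1) := by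
  rw [fderiv_clm_apply hg (differentiableAt_const _)]
  simp

lemma const_of_deriv_zero {a b : ℝ} {φ : ℝ → ℝ}
    (h : ∀ x ∈ Ioo a b, HasDerivAt φ 0 x) {x y : ℝ} (hx : x ∈ Ioo a b) (hy : y ∈ Ioo a b) :
    φ x = φ y := by
  apply Convex.is_const_of_fderivWithin_eq_zero (convex_Ioo a b)
    (fun z hz => ((h z hz).differentiableAt).differentiableWithinAt) ?_ hx hy
  intro z hz
  rw [fderivWithin_of_isOpen isOpen_Ioo hz, (h z hz).hasFDerivAt.fderiv]
  ext; simp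

lemma transport {N : ℕ} (α β : Fin N → ℝ) {g : (Fin N → ℝ) → ℝ} (S : Finset (Fin N))
    (hg : ∀ j ∈ S, ∀ r : Fin N → ℝ, (∀ m, r m ∈ Ioo (α m) (β m)) →
      HasDerivAt (fun s => g (Function.update r j s)) 0 (r j)) :
    ∀ r, (∀ m, r m ∈ Ioo (α m) (β m)) → ∀ q, (∀ m, q m ∈ Ioo (α m) (β m)) →
      (∀ j, j ∉ S → r j = q j) → g r = g q := by
  classical
  induction S using Finset.induction with
  | empty =>
    intro r _ q _ hagree
    have : r = q := funext fun j => hagree j (Finset.notMem_empty j)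
    rw [this]
  | @insert j S hjS IH =>
    intro r hr q hq hagree
    have hg' : ∀ m ∈ S, ∀ r : Fin N → ℝ, (∀ m, r m ∈ Ioo (α m) (β m)) →
        HasDerivAt (fun s => g (Function.update r m s)) 0 (r m) :=
      fun m hm => hg m (Finset.mem_insert_of_mem hm)
    have hgj := hg j (Finset.mem_insert_self j S)
    have hr' : ∀ m, (Function.update r j (q j)) m ∈ Ioo (α m) (β m) := by
      intro m
      by_cases h : m = j
      · subst h; simpa using hq m
      · simpa [Function.update_of_ne h] using hr m
    have step : g r = g (Function.update r j (q j)) := by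
      have hφ : ∀ x ∈ Ioo (α j) (β j),
          HasDerivAt (fun s => g (Function.update r j s)) 0 x := by
        intro x hx
        have hx' : ∀ m, (Function.update r j x) m ∈ Ioo (α m) (β m) := by
          intro m
          by_cases h : m = j
          · subst h; simpa using hx
          · simpa [Function.update_of_ne h] using hr m
        have h0 := hgj (Function.update r j x) hx'
        simpa [Function.update_idem] using h0
      have h1 := const_of_deriv_zero hφ (hr j) (hq j)
      simpa [Function.update_eq_self] using h1
    rw [step]
    refine IH hg' _ hr' q hq (fun m hm => ?_)
    by_cases h : m = j
    · subst h; simp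
    · rw [Function.update_of_ne h]
      exact hagree m (by simp [h, hm])

end RedVelAux

open RedVelAux

theorem reduction_velocities_structure
    (N : ℕ) (hN : 2 ≤ N) (α β : Fin N → ℝ) (hαβ : ∀ i, α i < β i)
    (U : Set (Fin N → ℝ)) (hU : U = {r | ∀ i, r i ∈ Set.Ioo (α i) (β i)})
    (c : ℤ → (Fin N → ℝ) → ℝ) (V : Fin N → (Fin N → ℝ) → ℝ)
    (hc : ∀ k : ℤ, ContDiffOn ℝ (⊤ : ℕ∞) (c k) U)
    (hV : ∀ i, ContDiffOn ℝ (⊤ : ℕ∞) (V i) U)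
    (hchain : ∀ k : ℤ, ∀ i : Fin N, ∀ r ∈ U,
      pd i (c (k + 1)) r = (V i r + c 1 r) * pd i (c k) r)
    (hnz : ∀ i : Fin N, ∀ r ∈ U, pd i (c 1) r ≠ 0)
    (hdist : ∀ i j : Fin N, i ≠ j → ∀ r ∈ U, V i r + c 1 r ≠ V j r + c 1 r) :
    ∃ f ψ : Fin N → ℝ → ℝ,
      (∀ i, ContDiffOn ℝ (⊤ : ℕ∞) (f i) (Set.Ioo (α i) (β i))) ∧
      (∀ i, ContDiffOn ℝ (⊤ : ℕ∞) (ψ i) (Set.Ioo (α i) (β i))) ∧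
      (∀ r ∈ U, c 1 r = ∑ m, ψ m (r m)) ∧
      (∀ i : Fin N, ∀ r ∈ U, V i r = f i (r i) - ∑ m, ψ m (r m)) := by
  classical
  have hUopen : IsOpen U := by
    rw [hU, show {r : Fin N → ℝ | ∀ i, r i ∈ Set.Ioo (α i) (β i)}
        = Set.pi Set.univ (fun i => Set.Ioo (α i) (β i)) by ext; simp [Set.mem_pi]]
    exact isOpen_set_pi Set.finite_univ (fun i _ => isOpen_Ioo)
  have hmem : ∀ r ∈ U, ∀ m, r m ∈ Ioo (α m) (β m) := by
    intro r hr; rw [hU] at hr; exact hr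
  have hmem' : ∀ r : Fin N → ℝ, (∀ m, r m ∈ Ioo (α m) (β m)) → r ∈ U := by
    intro r hr; rw [hU]; exact hr
  -- basic smoothness facts
  have hcat : ∀ k : ℤ, ∀ r ∈ U, ContDiffAt ℝ ((⊤:ℕ∞) : WithTop ℕ∞) (c k) r :=
    fun k r hr => (hc k).contDiffAt (hUopen.mem_nhds hr)
  have hcdiff : ∀ k : ℤ, ∀ r ∈ U, DifferentiableAt ℝ (c k) r :=
    fun k r hr => (hcat k r hr).differentiableAt (lt_of_lt_of_le zero_lt_one one_le_inf).ne'
  have hfd : ∀ k : ℤ, ∀ r ∈ U, DifferentiableAt ℝ (fderiv ℝ (c k)) r :=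
    fun k r hr => ((hcat k r hr).fderiv_right inf_add_one).differentiableAt (lt_of_lt_of_le zero_lt_one one_le_inf).ne'
  have hG : ∀ k : ℤ, ∀ i : Fin N, ∀ r ∈ U,
      DifferentiableAt ℝ (fun x => fderiv ℝ (c k) x (Pi.single i 1)) r :=
    fun k i r hr => (hfd k r hr).clm_apply (differentiableAt_const _)
  have hlamdiff : ∀ i : Fin N, ∀ r ∈ U, DifferentiableAt ℝ (fun x => V i x + c 1 x) r :=
    fun i r hr =>
      (((hV i).contDiffAt (hUopen.mem_nhds hr)).differentiableAt (lt_of_lt_of_le zero_lt_one one_le_inf).ne').add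
        (hcdiff 1 r hr)
  -- the chain rule in fderiv form
  have hchain' : ∀ k : ℤ, ∀ i : Fin N, ∀ r ∈ U,
      fderiv ℝ (c (k+1)) r (Pi.single i 1)
        = (V i r + c 1 r) * fderiv ℝ (c k) r (Pi.single i 1) := by
    intro k i r hr
    rw [← pd_eq_fderiv i (hcdiff (k+1) r hr), ← pd_eq_fderiv i (hcdiff k r hr)]
    exact hchain k i r hr
  -- second derivative of the chain relation
  have hDG : ∀ k : ℤ, ∀ i j : Fin N, ∀ r ∈ U,
      fderiv ℝ (fderiv ℝ (c (k+1))) r (Pi.single j 1) (Pi.single i 1)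
        = (V i r + c 1 r) * fderiv ℝ (fderiv ℝ (c k)) r (Pi.single j 1) (Pi.single i 1)
          + fderiv ℝ (c k) r (Pi.single i 1)
            * fderiv ℝ (fun x => V i x + c 1 x) r (Pi.single j 1) := by
    intro k i j r hr
    have hEq : (fun x => fderiv ℝ (c (k+1)) x (Pi.single i 1))
        =ᶠ[nhds r] (fun x => (V i x + c 1 x) * fderiv ℝ (c k) x (Pi.single i 1)) := by
      filter_upwards [hUopen.mem_nhds hr] with x hx
      exact hchain' k i x hx
    have h1 : fderiv ℝ (fun x => fderiv ℝ (c (k+1)) x (Pi.single i 1)) r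
        = fderiv ℝ (fun x => (V i x + c 1 x) * fderiv ℝ (c k) x (Pi.single i 1)) r :=
      hEq.fderiv_eq
    have h3 : fderiv ℝ (fun x => (V i x + c 1 x) * fderiv ℝ (c k) x (Pi.single i 1)) r
        = (V i r + c 1 r) • fderiv ℝ (fun x => fderiv ℝ (c k) x (Pi.single i 1)) r
          + fderiv ℝ (c k) r (Pi.single i 1) • fderiv ℝ (fun x => V i x + c 1 x) r :=
      fderiv_mul (hlamdiff i r hr) (hG k i r hr)
    have h2 := fderiv_inner_apply (hfd (k+1) r hr) i j
    have h4 := fderiv_inner_apply (hfd k r hr) i j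
    rw [← h2, h1, h3]
    simp only [ContinuousLinearMap.add_apply, ContinuousLinearMap.coe_smul',
      Pi.smul_apply, smul_eq_mul]
    rw [h4]
  have hsym : ∀ k : ℤ, ∀ i j : Fin N, ∀ r ∈ U,
      fderiv ℝ (fderiv ℝ (c k)) r (Pi.single j 1) (Pi.single i 1)
        = fderiv ℝ (fderiv ℝ (c k)) r (Pi.single i 1) (Pi.single j 1) :=
    fun k i j r hr => ((hcat k r hr).isSymmSndFDerivAt (by rw [minSmoothness_of_isRCLikeNormedField]; exact two_le_inf)) _ _
  -- the key pointwise vanishing results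
  have key : ∀ i j : Fin N, i ≠ j → ∀ r ∈ U,
      fderiv ℝ (fderiv ℝ (c 1)) r (Pi.single j 1) (Pi.single i 1) = 0
      ∧ fderiv ℝ (fun x => V i x + c 1 x) r (Pi.single j 1) = 0 := by
    intro i j hij r hr
    have e2i := hDG 1 i j r hr; norm_num at e2i
    have e2j := hDG 1 j i r hr; norm_num at e2j
    have e3i := hDG 2 i j r hr; norm_num at e3i
    have e3j := hDG 2 j i r hr; norm_num at e3j
    have e4i := hDG 3 i j r hr; norm_num at e4i
    have e4j := hDG 3 j i r hr; norm_num at e4j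
    have s1 := hsym 1 i j r hr
    have s2 := hsym 2 i j r hr
    have s3 := hsym 3 i j r hr
    have s4 := hsym 4 i j r hr
    have t2i := hchain' 1 i r hr; norm_num at t2i
    have t2j := hchain' 1 j r hr; norm_num at t2j
    have t3i := hchain' 2 i r hr; norm_num at t3i
    have t3j := hchain' 2 j r hr; norm_num at t3j
    set Li := V i r + c 1 r with hLi
    set Lj := V j r + c 1 r with hLj
    set t1i := fderiv ℝ (c 1) r (Pi.single i 1) with ht1i
    set t1j := fderiv ℝ (c 1) r (Pi.single j 1) with ht1j
    set Ai := fderiv ℝ (fun x => V i x + c 1 x) r (Pi.single j 1) with hAi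
    set Aj := fderiv ℝ (fun x => V j x + c 1 x) r (Pi.single i 1) with hAj
    set a := fderiv ℝ (fderiv ℝ (c 1)) r (Pi.single j 1) (Pi.single i 1) with ha
    -- rewrite the c2 second derivatives
    rw [t2i] at e3i
    rw [t2j] at e3j
    rw [e2i] at e3i
    rw [e2j] at e3j
    rw [t3i, t2i] at e4i
    rw [t3j, t2j] at e4j
    rw [e3i] at e4i
    rw [e3j] at e4j
    have hLij : Li ≠ Lj := hdist i j hij r hr
    have t1ne : t1i ≠ 0 := by
      have h0 := hnz i r hr
      rwa [pd_eq_fderiv i (hcdiff 1 r hr)] at h0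
    obtain ⟨ha0, hX, hY⟩ := alg3 Li Lj a (t1i * Ai) (t1j * Aj) hLij
      (by linear_combination (-1)*e2i + s2 + e2j - Lj*s1)
      (by linear_combination (-1)*e3i + s3 + e3j - Lj^2*s1)
      (by linear_combination (-1)*e4i + s4 + e4j - Lj^3*s1)
    exact ⟨ha0, by
      rcases mul_eq_zero.1 hX with h | h
      · exact absurd h t1ne
      · exact h⟩
  -- transport for the shifted velocities λ_i = V_i + c_1
  have hlam_trans : ∀ i : Fin N, ∀ r ∈ U, ∀ q ∈ U, r i = q i →
      V i r + c 1 r = V i q + c 1 q := by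
    intro i r hr q hq hri
    refine transport α β (g := fun x => V i x + c 1 x) (Finset.univ.erase i) ?_
      r (hmem r hr) q (hmem q hq) ?_
    · intro j hj x hx
      have hji : j ≠ i := (Finset.mem_erase.1 hj).1
      have hxU : x ∈ U := hmem' x hx
      have h := hasDerivAt_comp_update j (hlamdiff i x hxU)
      rwa [(key i j (Ne.symm hji) x hxU).2] at h
    · intro j hj
      have hj' : j = i := by simpa [Finset.mem_erase] using hj
      rw [hj']; exact hri
  -- transport for the partial derivatives of c 1
  have hG1_trans : ∀ i : Fin N, ∀ r ∈ U, ∀ q ∈ U, r i = q i →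
      fderiv ℝ (c 1) r (Pi.single i 1) = fderiv ℝ (c 1) q (Pi.single i 1) := by
    intro i r hr q hq hri
    refine transport α β (g := fun x => fderiv ℝ (c 1) x (Pi.single i 1))
      (Finset.univ.erase i) ?_ r (hmem r hr) q (hmem q hq) ?_
    · intro j hj x hx
      have hji : j ≠ i := (Finset.mem_erase.1 hj).1
      have hxU : x ∈ U := hmem' x hx
      have h := hasDerivAt_comp_update j (hG 1 i x hxU)
      rwa [fderiv_inner_apply (hfd 1 x hxU) i j, (key i j (Ne.symm hji) x hxU).1] at h
    · intro j hj
      have hj' : j = i := by simpa [Finset.mem_erase] using hj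
      rw [hj']; exact hri
  -- base point
  set p : Fin N → ℝ := fun m => (α m + β m)/2 with hpdef
  have hpIoo : ∀ m, p m ∈ Ioo (α m) (β m) := by
    intro m
    constructor
    · simp only [hpdef]; linarith [hαβ m]
    · simp only [hpdef]; linarith [hαβ m]
  have hpU : p ∈ U := hmem' p hpIoo
  have hupd_mem : ∀ (r : Fin N → ℝ), r ∈ U → ∀ (i : Fin N) (t : ℝ),
      t ∈ Ioo (α i) (β i) → Function.update r i t ∈ U := by
    intro r hr i t ht
    apply hmem'
    intro m
    by_cases h : m = i
    · subst h; simpa using ht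
    · simpa [Function.update_of_ne h] using hmem r hr m
  have hsum_split : ∀ (r : Fin N → ℝ) (i : Fin N) (s : ℝ),
      (∑ m, c 1 (Function.update p m (Function.update r i s m)))
        = c 1 (Function.update p i s)
          + ∑ m ∈ Finset.univ.erase i, c 1 (Function.update p m (r m)) := by
    intro r i s
    rw [← Finset.add_sum_erase Finset.univ _ (Finset.mem_univ i)]
    congr 1
    · rw [Function.update_self]
    · refine Finset.sum_congr rfl fun m hm => ?_
      rw [Function.update_of_ne (Finset.mem_erase.1 hm).1]
  -- the auxiliary function Fc is constant on U
  set Fc : (Fin N → ℝ) → ℝ := fun x => c 1 x - ∑ m, c 1 (Function.update p m (x m)) with hFcdef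
  have hFc_deriv : ∀ (i : Fin N) (r : Fin N → ℝ), (∀ m, r m ∈ Ioo (α m) (β m)) →
      HasDerivAt (fun s => Fc (Function.update r i s)) 0 (r i) := by
    intro i r hrm
    have hrU : r ∈ U := hmem' r hrm
    have hqU : Function.update p i (r i) ∈ U := hupd_mem p hpU i (r i) (hrm i)
    have h1 := hasDerivAt_comp_update i (hcdiff 1 r hrU)
    have h2 := hasDerivAt_comp_update i (hcdiff 1 _ hqU)
    simp only [Function.update_idem, Function.update_self] at h2
    have heq : (fun s => Fc (Function.update r i s))
        = fun s => c 1 (Function.update r i s)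
          - (c 1 (Function.update p i s)
            + ∑ m ∈ Finset.univ.erase i, c 1 (Function.update p m (r m))) := by
      funext s
      simp only [hFcdef]
      rw [hsum_split r i s]
    have h3 := h1.sub (h2.add_const
      (∑ m ∈ Finset.univ.erase i, c 1 (Function.update p m (r m))))
    have hval : fderiv ℝ (c 1) r (Pi.single i 1)
        - fderiv ℝ (c 1) (Function.update p i (r i)) (Pi.single i 1) = 0 := by
      rw [hG1_trans i r hrU _ hqU (Function.update_self i (r i) p).symm]
      ring
    rw [heq]
    rwa [hval] at h3
  have hFc_const : ∀ r ∈ U, Fc r = Fc p := by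
    intro r hr
    exact transport α β Finset.univ (fun j _ => hFc_deriv j) r (hmem r hr) p hpIoo
      (fun j hj => absurd (Finset.mem_univ j) hj)
  have hFcp : Fc p = c 1 p - N * c 1 p := by
    simp only [hFcdef]
    have hs : (∑ m, c 1 (Function.update p m (p m))) = (N:ℝ) * c 1 p := by
      rw [show (∑ m, c 1 (Function.update p m (p m))) = ∑ _m : Fin N, c 1 p from
        Finset.sum_congr rfl fun m _ => by rw [Function.update_eq_self]]
      rw [Finset.sum_const, Finset.card_univ, Fintype.card_fin, nsmul_eq_mul]
    rw [hs]
  have hNne : (N:ℝ) ≠ 0 := Nat.cast_ne_zero.2 (by omega)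
  -- the decomposition of c 1 as a sum of one-variable functions
  have hc1sum : ∀ r ∈ U, c 1 r
      = ∑ m, (c 1 (Function.update p m (r m)) - ((N:ℝ) - 1)/(N:ℝ) * c 1 p) := by
    intro r hr
    have hid := hFc_const r hr
    rw [hFcp] at hid
    simp only [hFcdef] at hid
    have hsum : ∑ m, (c 1 (Function.update p m (r m)) - ((N:ℝ)-1)/(N:ℝ) * c 1 p)
        = (∑ m, c 1 (Function.update p m (r m)))
          - (N:ℝ) * (((N:ℝ)-1)/(N:ℝ) * c 1 p) := by
      rw [Finset.sum_sub_distrib, Finset.sum_const, Finset.card_univ, Fintype.card_fin,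
        nsmul_eq_mul]
    rw [hsum]
    have hmul : (N:ℝ) * (((N:ℝ)-1)/(N:ℝ) * c 1 p) = ((N:ℝ)-1) * c 1 p := by
      field_simp
    rw [hmul]
    linarith [hid]
  -- smoothness of the one-variable building blocks
  have hupd_cd : ∀ i : Fin N, ContDiff ℝ ((⊤:ℕ∞) : WithTop ℕ∞)
      (fun t : ℝ => Function.update p i t) := by
    intro i
    have hline : (fun t : ℝ => Function.update p i t)
        = fun t : ℝ => Function.update p i 0 + t • (Pi.single i 1 : Fin N → ℝ) := by
      funext s
      funext j
      by_cases h : j = i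
      · subst h; simp
      · simp [Function.update_of_ne h, Pi.single_apply, h]
    rw [hline]
    exact contDiff_const.add (contDiff_id.smul contDiff_const)
  have hmaps : ∀ i : Fin N, MapsTo (fun t : ℝ => Function.update p i t) (Ioo (α i) (β i)) U :=
    fun i t ht => hupd_mem p hpU i t ht
  have hψcd : ∀ i : Fin N, ContDiffOn ℝ (⊤ : ℕ∞)
      (fun t : ℝ => c 1 (Function.update p i t)) (Ioo (α i) (β i)) :=
    fun i => (hc 1).comp ((hupd_cd i).contDiffOn) (hmaps i)
  have hfcdV : ∀ i : Fin N, ContDiffOn ℝ (⊤ : ℕ∞)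
      (fun t : ℝ => V i (Function.update p i t)) (Ioo (α i) (β i)) :=
    fun i => (hV i).comp ((hupd_cd i).contDiffOn) (hmaps i)
  refine ⟨fun i t => V i (Function.update p i t) + c 1 (Function.update p i t),
    fun m t => c 1 (Function.update p m t) - ((N:ℝ) - 1)/(N:ℝ) * c 1 p, ?_, ?_, ?_, ?_⟩
  · exact fun i => (hfcdV i).add (hψcd i)
  · exact fun i => (hψcd i).sub contDiffOn_const
  · exact hc1sum
  · intro i r hr
    have hqU : Function.update p i (r i) ∈ U := hupd_mem p hpU i (r i) (hmem r hr i)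
    have hf := hlam_trans i (Function.update p i (r i)) hqU r hr
      (Function.update_self i (r i) p)
    have hs := hc1sum r hr
    linarith [hf, hs]
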